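/- arXiv:1902.03881 — 2 statements merged into one kernel-verified Lean document; each statement's English description precedes it below -/
import Mathlib

section
/- Let A = [[α, β], [γ, δ]] be a normalized matrix in GL₂⁻(ℤ) with A ≠ H and A ≠ -H. Then β and δ are both nonzero and β/δ > 0 (equivalently, βδ > 0). -/
def IsNormalized (α β γ δ : ℤ) : Prop :=
  α * δ - β * γ = -1 ∧ β ≠ 0 ∧
  0 ≤ (β / |β|) * α ∧ (β / |β|) * α < |β| ∧
  0 ≤ (β / |β|) * δ ∧ (β / |β|) * δ < |β|

/-- For a normalized matrix `A = [[α,β],[γ,δ]]` with `A ≠ H` and `A ≠ -H`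
(`H = [[0,1],[1,0]]`), both `β` and `δ` are nonzero and `β/δ > 0`
(equivalently `βδ > 0`). -/
theorem stmt_2 (α β γ δ : ℤ) (h : IsNormalized α β γ δ)
    (hH : ¬(α = 0 ∧ β = 1 ∧ γ = 1 ∧ δ = 0))
    (hH' : ¬(α = 0 ∧ β = -1 ∧ γ = -1 ∧ δ = 0)) :
    β ≠ 0 ∧ δ ≠ 0 ∧ (β : ℚ) / (δ : ℚ) > 0 ∧ β * δ > 0 := by
  obtain ⟨hdet, hβ, h1, h2, h3, h4⟩ := h
  have hβδ : β * δ > 0 := by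
    rcases lt_or_gt_of_ne hβ with hneg | hpos
    · have habs : |β| = -β := abs_of_neg hneg
      rw [habs] at h1 h2 h3 h4
      have hdiv : β / (-β) = -1 := by
        rw [Int.ediv_neg, Int.ediv_self hβ]
      rw [hdiv] at h1 h2 h3 h4
      -- 0 ≤ -α < -β, 0 ≤ -δ < -β
      have hδ0 : δ ≠ 0 := by
        intro h0
        subst h0
        have hbg : β * γ = 1 := by linarith
        have hb1 : β = -1 := by
          have := Int.eq_one_of_mul_eq_one_right (by linarith : (0:ℤ) ≤ -β)
            (show -β * -γ = 1 by linear_combination hbg)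
          linarith
        have hg1 : γ = -1 := by
          rw [hb1] at hbg; linarith
        have hα0 : α = 0 := by
          rw [hb1] at h2; simp at h1 h2; omega
        exact hH' ⟨hα0, hb1, hg1, rfl⟩
      have : -δ > 0 := by
        rcases lt_or_eq_of_le h3 with h | h
        · linarith [h]
        · exfalso; apply hδ0; linarith
      exact mul_pos_of_neg_of_neg hneg (by linarith)
    · have habs : |β| = β := abs_of_pos hpos
      rw [habs] at h1 h2 h3 h4
      have hdiv : β / β = 1 := Int.ediv_self hβ
      rw [hdiv] at h1 h2 h3 h4
      simp at h1 h2 h3 h4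
      have hδ0 : δ ≠ 0 := by
        intro h0
        subst h0
        have hbg : β * γ = 1 := by linarith
        have hb1 : β = 1 :=
          Int.eq_one_of_mul_eq_one_right (le_of_lt hpos) hbg
        have hg1 : γ = 1 := by rw [hb1] at hbg; linarith
        have hα0 : α = 0 := by omega
        exact hH ⟨hα0, hb1, hg1, rfl⟩
      have : δ > 0 := lt_of_le_of_ne h3 (Ne.symm hδ0)
      exact mul_pos hpos this
  have hδ : δ ≠ 0 := by
    intro h0; subst h0; simp at hβδ
  refine ⟨hβ, hδ, ?_, hβδ⟩
  have : (β : ℚ) * δ > 0 := by exact_mod_cast hβδ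
  rcases mul_pos_iff.mp this with ⟨hb, hd⟩ | ⟨hb, hd⟩
  · exact div_pos hb hd
  · exact div_pos_of_neg_of_neg hb hd
end

section
/- Let A = [[α, β], [γ, δ]] be a 2×2 integer matrix with determinant -1 and β ≠ 0. Set k = -⌊α/β⌋ and h = -⌊δ/β⌋, and let U = [[1,0],[1,1]]. Then the matrix A' = Uʰ A Uᵏ = [[α + kβ, β], [γ + hα + kδ + khβ, δ + hβ]] is normalized. -/
lemma aux_floor_bound (α β : ℤ) (hβ : β ≠ 0) :
    0 ≤ (β / |β|) * (α - ⌊(α : ℚ) / (β : ℚ)⌋ * β) ∧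
      (β / |β|) * (α - ⌊(α : ℚ) / (β : ℚ)⌋ * β) < |β| := by
  set q : ℤ := ⌊(α : ℚ) / (β : ℚ)⌋ with hq
  have hq1 : (q : ℚ) ≤ (α : ℚ) / (β : ℚ) := Int.floor_le _
  have hq2 : (α : ℚ) / (β : ℚ) < q + 1 := Int.lt_floor_add_one _
  rcases lt_or_gt_of_ne hβ with hneg | hpos
  · have habs : |β| = -β := abs_of_neg hneg
    have hdiv : β / |β| = -1 := by rw [habs, Int.ediv_neg, Int.ediv_self hβ]
    have hbQ : (β : ℚ) < 0 := by exact_mod_cast hneg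
    have h1 : (α : ℚ) ≤ q * β := (le_div_iff_of_neg hbQ).mp hq1
    have h2 : ((q : ℚ) + 1) * β < α := (div_lt_iff_of_neg hbQ).mp hq2
    have h1' : α ≤ q * β := by exact_mod_cast h1
    have h2' : (q + 1) * β < α := by exact_mod_cast h2
    refine ⟨by rw [hdiv]; nlinarith, by rw [hdiv, habs]; nlinarith⟩
  · have habs : |β| = β := abs_of_pos hpos
    have hdiv : β / |β| = 1 := by rw [habs, Int.ediv_self hβ]
    have hbQ : (0 : ℚ) < β := by exact_mod_cast hpos
    have h1 : (q : ℚ) * β ≤ α := (le_div_iff₀ hbQ).mp hq1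
    have h2 : (α : ℚ) < ((q : ℚ) + 1) * β := (div_lt_iff₀ hbQ).mp hq2
    have h1' : q * β ≤ α := by exact_mod_cast h1
    have h2' : α < (q + 1) * β := by exact_mod_cast h2
    exact ⟨by rw [hdiv]; nlinarith, by rw [hdiv, habs]; nlinarith⟩

/-- Given `A = [[α,β],[γ,δ]]` with determinant `-1` and `β ≠ 0`, setting
`k = -⌊α/β⌋` and `h = -⌊δ/β⌋`, the matrix
`A' = Uʰ A Uᵏ = [[α + kβ, β], [γ + hα + kδ + khβ, δ + hβ]]` is normalized. -/
theorem stmt_4 (α β γ δ : ℤ) (hdet : α * δ - β * γ = -1) (hβ : β ≠ 0)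
    (k h : ℤ) (hk : k = -⌊(α : ℚ) / (β : ℚ)⌋) (hh : h = -⌊(δ : ℚ) / (β : ℚ)⌋) :
    IsNormalized (α + k * β) β (γ + h * α + k * δ + k * h * β) (δ + h * β) := by
  obtain ⟨ha1, ha2⟩ := aux_floor_bound α β hβ
  obtain ⟨hd1, hd2⟩ := aux_floor_bound δ β hβ
  have e1 : α + k * β = α - ⌊(α : ℚ) / (β : ℚ)⌋ * β := by rw [hk]; ring
  have e2 : δ + h * β = δ - ⌊(δ : ℚ) / (β : ℚ)⌋ * β := by rw [hh]; ring
  refine ⟨by ring_nf; linarith, hβ, ?_, ?_, ?_, ?_⟩ <;>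
    simp only [e1, e2] <;> assumption
end
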